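/- For every natural number n, the n-th bi-periodic Jacobsthal matrix J_n equals the 2×2 matrix with entries J_n(0,0) = (b/a)^{ε(n)}·j_{n+1}, J_n(0,1) = 2(b/a)·j_n, J_n(1,0) = j_n, J_n(1,1) = 2(b/a)^{ε(n)}·j_{n-1}, where ε(n) = 0 if n is even and ε(n) = 1 if n is odd, and j_{-1} is interpreted as 1/2. -/
import Mathlib

noncomputable def jj (a b : ℝ) : ℕ → ℝ
  | 0 => 0
  | 1 => 1
  | n + 2 => (if Even (n + 2) then a else b) * jj a b (n + 1) + 2 * jj a b n

noncomputable def JM (a b : ℝ) : ℕ → Matrix (Fin 2) (Fin 2) ℝ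
  | 0 => 1
  | 1 => !![b, 2 * b / a; 1, 0]
  | n + 2 => (if Even (n + 2) then a else b) • JM a b (n + 1) + (2 : ℝ) • JM a b n

lemma key (a b : ℝ) (ha : a ≠ 0) (n : ℕ) :
    JM a b n =
      !![(b / a) ^ (n % 2) * jj a b (n + 1), 2 * (b / a) * jj a b n;
         jj a b n,
         (b / a) ^ (n % 2) * (jj a b (n + 1) - (if Even n then b else a) * jj a b n)] := by
  induction n using Nat.twoStepInduction with
  | zero =>
    simp [JM, jj]
    ext i j
    fin_cases i <;> fin_cases j <;> simp [jj]
  | one =>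
    have h2 : jj a b 2 = a := by simp [jj]
    ext i j
    fin_cases i <;> fin_cases j <;>
      simp [JM, h2, jj, Nat.even_iff] <;> field_simp
  | more n ih1 ih2 =>
    have e1 : JM a b (n + 2) = (if Even (n + 2) then a else b) • JM a b (n + 1)
        + (2 : ℝ) • JM a b n := by rw [JM]
    have r3 : jj a b (n + 3) = (if Even (n + 3) then a else b) * jj a b (n + 2)
        + 2 * jj a b (n + 1) := by rw [jj]
    have r2 : jj a b (n + 2) = (if Even (n + 2) then a else b) * jj a b (n + 1)
        + 2 * jj a b n := by rw [jj]
    rw [e1, ih1, ih2]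
    rcases Nat.even_or_odd n with he | ho
    · have h0 : n % 2 = 0 := Nat.even_iff.mp he
      have hp2 : Even (n + 2) := by rw [Nat.even_iff]; omega
      have hp3 : ¬ Even (n + 3) := by rw [Nat.even_iff]; omega
      have hp1 : ¬ Even (n + 1) := by rw [Nat.even_iff]; omega
      have h1 : (n + 1) % 2 = 1 := by omega
      have h2 : (n + 2) % 2 = 0 := by omega
      rw [r3] at *
      rw [r2] at *
      ext i j
      fin_cases i <;> fin_cases j <;>
        simp [h0, h1, h2, he, hp1, hp2, hp3] <;> field_simp <;> ring
    · have h0 : n % 2 = 1 := Nat.odd_iff.mp ho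
      have he' : ¬ Even n := by rw [Nat.even_iff]; omega
      have hp2 : ¬ Even (n + 2) := by rw [Nat.even_iff]; omega
      have hp3 : Even (n + 3) := by rw [Nat.even_iff]; omega
      have hp1 : Even (n + 1) := by rw [Nat.even_iff]; omega
      have h1 : (n + 1) % 2 = 0 := by omega
      have h2 : (n + 2) % 2 = 1 := by omega
      rw [r3] at *
      rw [r2] at *
      ext i j
      fin_cases i <;> fin_cases j <;>
        simp [h0, h1, h2, he', hp1, hp2, hp3] <;> field_simp <;> ring

theorem stmt1 (a b : ℝ) (ha : a ≠ 0) (hb : b ≠ 0) (n : ℕ) :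
    JM a b n =
      !![(b / a) ^ (n % 2) * jj a b (n + 1), 2 * (b / a) * jj a b n;
         jj a b n, 2 * (b / a) ^ (n % 2) * (if n = 0 then (1 / 2 : ℝ) else jj a b (n - 1))] := by
  rw [key a b ha n]
  congr 1
  rcases n with _ | m
  · norm_num [jj]
  · simp only [Nat.succ_ne_zero, if_neg, Nat.add_sub_cancel]
    have r : jj a b (m + 2) = (if Even (m + 2) then a else b) * jj a b (m + 1)
        + 2 * jj a b m := by rw [jj]
    have hpar : (if Even (m + 1) then b else a) = (if Even (m + 2) then a else b) := by
      by_cases h : Even m <;> simp [Nat.even_add, h]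
    rw [hpar, r]
    ext i j
    fin_cases i <;> fin_cases j <;> simp <;> ring
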